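/- Let A, B₁, B₂ be bounded operators on a complex Hilbert space H. Then R(A) ⊆ R(B₁) + R(B₂) if and only if AA* ≤ k²(B₁B₁* + B₂B₂*) for some k ≥ 0. -/

import Mathlib

open ContinuousLinearMap Pointwise

section Aux
variable {H : Type*} [NormedAddCommGroup H] [InnerProductSpace ℂ H] [CompleteSpace H]
local notation "⟪" x ", " y "⟫" => @inner ℂ _ _ x y

private lemma pos_iff (A B₁ B₂ : H →L[ℂ] H) (k : ℝ) :
    (((k : ℂ) ^ 2) • (B₁ ∘L adjoint B₁ + B₂ ∘L adjoint B₂) - A ∘L adjoint A).IsPositive ↔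
      ∀ x : H, ‖adjoint A x‖ ^ 2 ≤ k ^ 2 * (‖adjoint B₁ x‖ ^ 2 + ‖adjoint B₂ x‖ ^ 2) := by
  have key : ∀ x : H, (((k : ℂ) ^ 2) • (B₁ ∘L adjoint B₁ + B₂ ∘L adjoint B₂)
      - A ∘L adjoint A).reApplyInnerSelf x
      = k ^ 2 * (‖adjoint B₁ x‖ ^ 2 + ‖adjoint B₂ x‖ ^ 2) - ‖adjoint A x‖ ^ 2 := by
    intro x
    rw [reApplyInnerSelf_apply]
    simp only [sub_apply, smul_apply, add_apply, comp_apply, inner_sub_left, inner_smul_left,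
      inner_add_left]
    rw [show ⟪B₁ ((adjoint B₁) x), x⟫ = ⟪adjoint B₁ x, adjoint B₁ x⟫ from (adjoint_inner_right B₁ _ _).symm,
       show ⟪B₂ ((adjoint B₂) x), x⟫ = ⟪adjoint B₂ x, adjoint B₂ x⟫ from (adjoint_inner_right B₂ _ _).symm,
       show ⟪A ((adjoint A) x), x⟫ = ⟪adjoint A x, adjoint A x⟫ from (adjoint_inner_right A _ _).symm]
    simp only [inner_self_eq_norm_sq_to_K, map_pow, Complex.conj_ofReal]
    simp [Complex.sub_re, Complex.add_re, ← Complex.ofReal_pow, Complex.re_ofReal_mul,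
      Complex.ofReal_re]
  have hsa : IsSelfAdjoint (((k : ℂ) ^ 2) • (B₁ ∘L adjoint B₁ + B₂ ∘L adjoint B₂)
      - A ∘L adjoint A) := by
    apply IsSelfAdjoint.sub
    · apply IsSelfAdjoint.smul
      · rw [← Complex.ofReal_pow]
        exact Complex.conj_ofReal _
      · apply IsSelfAdjoint.add <;>
        · rw [IsSelfAdjoint, star_eq_adjoint, adjoint_comp, adjoint_adjoint]
    · rw [IsSelfAdjoint, star_eq_adjoint, adjoint_comp, adjoint_adjoint]
  constructor
  · intro h x
    have := h.2 x
    rw [key] at this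
    linarith
  · intro h
    refine isPositive_def'.mpr ⟨hsa, fun x => ?_⟩
    rw [key]
    linarith [h x]

private lemma mem_of_bound (B₁ B₂ : H →L[ℂ] H) (u : H) (c : ℝ) (hc : 0 ≤ c)
    (hb : ∀ x : H, ‖(⟪u, x⟫ : ℂ)‖ ^ 2 ≤ c ^ 2 * (‖adjoint B₁ x‖ ^ 2 + ‖adjoint B₂ x‖ ^ 2)) :
    u ∈ Set.range B₁ + Set.range B₂ := by
  classical
  set K := WithLp 2 (H × H)
  let T : H →ₗ[ℂ] K :=
    ((WithLp.linearEquiv 2 ℂ (H × H)).symm.toLinearMap).comp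
      (((adjoint B₁).toLinearMap).prod ((adjoint B₂).toLinearMap))
  have hT1 : ∀ x : H, (T x).fst = adjoint B₁ x := fun x => rfl
  have hT2 : ∀ x : H, (T x).snd = adjoint B₂ x := fun x => rfl
  have hTnorm : ∀ x : H, ‖T x‖ ^ 2 = ‖adjoint B₁ x‖ ^ 2 + ‖adjoint B₂ x‖ ^ 2 := by
    intro x
    rw [WithLp.prod_norm_sq_eq_of_L2, hT1, hT2]
  -- bound in non-squared form
  have hb' : ∀ x : H, ‖(⟪u, x⟫ : ℂ)‖ ≤ c * ‖T x‖ := by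
    intro x
    have h1 := hb x
    rw [← hTnorm x] at h1
    nlinarith [norm_nonneg (⟪u, x⟫ : ℂ), norm_nonneg (T x), mul_nonneg hc (norm_nonneg (T x))]
  -- well-definedness
  have key : ∀ x x' : H, T x = T x' → (⟪u, x⟫ : ℂ) = ⟪u, x'⟫ := by
    intro x x' hxx
    have h0 : T (x - x') = 0 := by rw [map_sub, hxx, sub_self]
    have := hb' (x - x')
    rw [h0, norm_zero, mul_zero] at this
    have : (⟪u, x - x'⟫ : ℂ) = 0 := norm_le_zero_iff.mp this
    rw [inner_sub_right, sub_eq_zero] at this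
    exact this
  let w : K → ℂ := fun z => if h : ∃ x, T x = z then ⟪u, h.choose⟫ else 0
  have hw : ∀ x : H, w (T x) = ⟪u, x⟫ := by
    intro x
    have h : ∃ x', T x' = T x := ⟨x, rfl⟩
    simp only [w, dif_pos h]
    exact key _ _ h.choose_spec
  let g₀ : (LinearMap.range T) →ₗ[ℂ] ℂ :=
    { toFun := fun z => w z.1
      map_add' := by
        rintro ⟨_, x, rfl⟩ ⟨_, x', rfl⟩
        simp only [Submodule.coe_add, ← map_add T, hw, inner_add_right]
      map_smul' := by
        rintro a ⟨_, x, rfl⟩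
        simp only [SetLike.val_smul, ← map_smul T, hw, inner_smul_right, RingHom.id_apply, smul_eq_mul] }
  have hg₀ : ∀ z : LinearMap.range T, ‖g₀ z‖ ≤ c * ‖z‖ := by
    rintro ⟨_, x, rfl⟩
    have := hb' x
    simp only [g₀, LinearMap.coe_mk, AddHom.coe_mk, hw]
    exact this
  let f : (LinearMap.range T) →L[ℂ] ℂ := LinearMap.mkContinuous g₀ c hg₀
  obtain ⟨g, hg, -⟩ := exists_extension_norm_eq (LinearMap.range T) f
  let v : K := (InnerProductSpace.toDual ℂ K).symm g
  have hv : ∀ x : H, (⟪v, T x⟫ : ℂ) = ⟪u, x⟫ := by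
    intro x
    rw [InnerProductSpace.toDual_symm_apply]
    have := hg ⟨T x, ⟨x, rfl⟩⟩
    rw [this]
    exact hw x
  have hfinal : B₁ v.fst + B₂ v.snd = u := by
    have horto : ∀ x : H, (⟪B₁ v.fst + B₂ v.snd - u, x⟫ : ℂ) = 0 := by
      intro x
      have h1 : (⟪v, T x⟫ : ℂ) = ⟪B₁ v.fst + B₂ v.snd, x⟫ := by
        rw [WithLp.prod_inner_apply]
        change ⟪v.fst, (T x).fst⟫ + ⟪v.snd, (T x).snd⟫ = _
        rw [hT1, hT2, inner_add_left,
          ← adjoint_inner_right B₁, ← adjoint_inner_right B₂]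
      rw [inner_sub_left, ← h1, hv, sub_self]
    have := horto (B₁ v.fst + B₂ v.snd - u)
    rw [inner_self_eq_zero] at this
    exact sub_eq_zero.mp this
  exact ⟨B₁ v.fst, ⟨v.fst, rfl⟩, B₂ v.snd, ⟨v.snd, rfl⟩, hfinal⟩

private lemma forward_bound (A B₁ B₂ : H →L[ℂ] H)
    (hsub : Set.range A ⊆ Set.range B₁ + Set.range B₂) :
    ∃ k : ℝ, 0 ≤ k ∧
      ∀ x : H, ‖adjoint A x‖ ^ 2 ≤ k ^ 2 * (‖adjoint B₁ x‖ ^ 2 + ‖adjoint B₂ x‖ ^ 2) := by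
  classical
  set S : H → ℝ := fun x => ‖adjoint B₁ x‖ ^ 2 + ‖adjoint B₂ x‖ ^ 2 with hS
  let ι := {x : H // S x ≤ 1}
  let g : ι → H →L[ℂ] ℂ := fun i => (innerSL ℂ i.1).comp A
  have hpt : ∀ y : H, ∃ C : ℝ, ∀ i : ι, ‖g i y‖ ≤ C := by
    intro y
    obtain ⟨-, ⟨a, rfl⟩, -, ⟨b, rfl⟩, hab⟩ := hsub (Set.mem_range_self y)
    refine ⟨‖a‖ + ‖b‖, fun i => ?_⟩
    have hi : ‖adjoint B₁ i.1‖ ^ 2 + ‖adjoint B₂ i.1‖ ^ 2 ≤ 1 := i.2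
    have hx1 : ‖adjoint B₁ i.1‖ ≤ 1 := by
      nlinarith [norm_nonneg (adjoint B₁ i.1), norm_nonneg (adjoint B₂ i.1)]
    have hx2 : ‖adjoint B₂ i.1‖ ≤ 1 := by
      nlinarith [norm_nonneg (adjoint B₁ i.1), norm_nonneg (adjoint B₂ i.1)]
    have : g i y = ⟪adjoint B₁ i.1, a⟫ + ⟪adjoint B₂ i.1, b⟫ := by
      simp only [g, comp_apply, innerSL_apply_apply, ← hab, inner_add_right, adjoint_inner_left]
    rw [this]
    calc ‖(⟪adjoint B₁ i.1, a⟫ : ℂ) + ⟪adjoint B₂ i.1, b⟫‖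
        ≤ ‖(⟪adjoint B₁ i.1, a⟫ : ℂ)‖ + ‖(⟪adjoint B₂ i.1, b⟫ : ℂ)‖ := norm_add_le _ _
      _ ≤ ‖adjoint B₁ i.1‖ * ‖a‖ + ‖adjoint B₂ i.1‖ * ‖b‖ := by
          gcongr <;> exact norm_inner_le_norm _ _
      _ ≤ ‖a‖ + ‖b‖ := by
          gcongr ?_ + ?_
          · exact mul_le_of_le_one_left (norm_nonneg a) hx1
          · exact mul_le_of_le_one_left (norm_nonneg b) hx2
  obtain ⟨C', hC'⟩ := banach_steinhaus hpt
  refine ⟨max C' 0, le_max_right _ _, ?_⟩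
  set k := max C' 0 with hk
  have hk0 : 0 ≤ k := le_max_right _ _
  -- step 1
  have step1 : ∀ x : H, S x ≤ 1 → ‖adjoint A x‖ ≤ k := by
    intro x hx
    have h1 : ‖g ⟨x, hx⟩ (adjoint A x)‖ ≤ k * ‖adjoint A x‖ := by
      calc ‖g ⟨x, hx⟩ (adjoint A x)‖ ≤ ‖g ⟨x, hx⟩‖ * ‖adjoint A x‖ := le_opNorm _ _
        _ ≤ k * ‖adjoint A x‖ := by
            gcongr; exact le_trans (hC' ⟨x, hx⟩) (le_max_left _ _)
    have h2 : ‖g ⟨x, hx⟩ (adjoint A x)‖ = ‖adjoint A x‖ ^ 2 := by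
      simp only [g, comp_apply, innerSL_apply_apply]
      rw [show (⟪x, A (adjoint A x)⟫ : ℂ) = ⟪adjoint A x, adjoint A x⟫ from
        (adjoint_inner_left A _ _).symm]
      simp [inner_self_eq_norm_sq_to_K]
    rw [h2] at h1
    nlinarith [norm_nonneg (adjoint A x)]
  -- step 2 : scaling
  intro x
  have hcore : ∀ ε : ℝ, 0 < ε → ‖adjoint A x‖ ^ 2 ≤ k ^ 2 * (S x + ε) := by
    intro ε hε
    have hSx : 0 ≤ S x := by positivity
    set t := Real.sqrt (S x + ε) with ht
    have ht0 : 0 < t := Real.sqrt_pos.mpr (by linarith)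
    have ht2 : t ^ 2 = S x + ε := Real.sq_sqrt (by linarith)
    set x' := ((t⁻¹ : ℝ) : ℂ) • x with hx'
    have hnorm : ∀ (T : H →L[ℂ] H), ‖T x'‖ = t⁻¹ * ‖T x‖ := by
      intro T
      rw [hx', map_smul, norm_smul, Complex.norm_real, Real.norm_eq_abs,
        abs_of_pos (inv_pos.mpr ht0)]
    have hSx' : S x' ≤ 1 := by
      have h1 := hnorm (adjoint B₁)
      have h2 := hnorm (adjoint B₂)
      have : S x' = t⁻¹ ^ 2 * S x := by
        simp only [hS, h1, h2]; ring
      rw [this]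
      rw [inv_pow]
      rw [inv_mul_le_iff₀ (by positivity), mul_one, ht2]
      linarith
    have := step1 x' hSx'
    rw [hnorm (adjoint A)] at this
    have h3 : ‖adjoint A x‖ ≤ k * t := by
      rw [inv_mul_le_iff₀ ht0] at this
      linarith [this]
    calc ‖adjoint A x‖ ^ 2 ≤ (k * t) ^ 2 := by
          apply pow_le_pow_left₀ (norm_nonneg _) h3
      _ = k ^ 2 * (S x + ε) := by rw [mul_pow, ht2]
  refine le_of_forall_pos_le_add fun ε hε => ?_
  have hε' : 0 < ε / (k ^ 2 + 1) := by positivity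
  have := hcore _ hε'
  have : k ^ 2 * (S x + ε / (k ^ 2 + 1)) ≤ k ^ 2 * S x + ε := by
    have h1 : k ^ 2 * (ε / (k ^ 2 + 1)) ≤ ε := by
      rw [div_eq_mul_inv]
      rw [show k ^ 2 * (ε * (k ^ 2 + 1)⁻¹) = ε * (k ^ 2 * (k ^ 2 + 1)⁻¹) by ring]
      have : k ^ 2 * (k ^ 2 + 1)⁻¹ ≤ 1 := by
        rw [mul_inv_le_iff₀ (by positivity)]
        linarith
      nlinarith [hε.le]
    nlinarith []
  linarith [hcore _ hε']

end Aux

/-- `R(A) ⊆ R(B₁) + R(B₂)` iff `A A* ≤ k² (B₁ B₁* + B₂ B₂*)` for some `k ≥ 0`. -/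
theorem range_subset_sum_iff_majorization
    {H : Type*} [NormedAddCommGroup H] [InnerProductSpace ℂ H] [CompleteSpace H]
    (A B₁ B₂ : H →L[ℂ] H) :
    Set.range A ⊆ Set.range B₁ + Set.range B₂ ↔
      ∃ k : ℝ, 0 ≤ k ∧
        (((k : ℂ) ^ 2) • (B₁ ∘L adjoint B₁ + B₂ ∘L adjoint B₂)
          - A ∘L adjoint A).IsPositive := by
  constructor
  · intro hsub
    obtain ⟨k, hk0, hbound⟩ := forward_bound A B₁ B₂ hsub
    exact ⟨k, hk0, (pos_iff A B₁ B₂ k).mpr hbound⟩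
  · rintro ⟨k, hk0, hpos⟩
    have hb := (pos_iff A B₁ B₂ k).mp hpos
    rintro u ⟨y, rfl⟩
    apply mem_of_bound B₁ B₂ (A y) (‖y‖ * k) (mul_nonneg (norm_nonneg y) hk0)
    intro x
    have h1 : ‖(inner ℂ (A y) x : ℂ)‖ ≤ ‖y‖ * ‖adjoint A x‖ := by
      rw [show (inner ℂ (A y) x : ℂ) = inner ℂ y (adjoint A x) from
        (ContinuousLinearMap.adjoint_inner_right A y x).symm]
      exact norm_inner_le_norm _ _
    have h1' : ‖(inner ℂ (A y) x : ℂ)‖ ^ 2 ≤ (‖y‖ * ‖adjoint A x‖) ^ 2 :=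
      pow_le_pow_left₀ (norm_nonneg _) h1 2
    have h2 := mul_le_mul_of_nonneg_left (hb x) (sq_nonneg ‖y‖)
    nlinarith [h1', h2]
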